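/- Let α be a root of unity in ℂ with (α−1)² ∈ 3·ℤ̄. Then α³ = 1. -/

import Mathlib

open Finset Polynomial

lemma aux_sq_lt_pow (m : ℕ) (hm : 3 ≤ m) : (m + 1) ^ 2 < 3 ^ m := by
  induction m with
  | zero => omega
  | succ k ih =>
    rcases Nat.lt_or_ge k 3 with h | h
    · interval_cases k <;> omega
    · have h1 := ih h
      have h2 : 0 < 3 ^ k := by positivity
      have : 3 ^ (k + 1) = 3 * 3 ^ k := by ring
      nlinarith

theorem stmt_16 (α : ℂ) (hord : ∃ k : ℕ, 1 ≤ k ∧ α ^ k = 1)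
    (h : ∃ β : ℂ, IsIntegral ℤ β ∧ (α - 1) ^ 2 = 3 * β) :
    α ^ 3 = 1 := by
  obtain ⟨k, hk1, hk⟩ := hord
  obtain ⟨β, hβint, hβ⟩ := h
  have hne : orderOf α ≠ 0 := by
    intro h0
    have hd := orderOf_dvd_of_pow_eq_one hk
    rw [h0] at hd
    have := Nat.eq_zero_of_zero_dvd hd
    omega
  obtain ⟨m, hm⟩ : ∃ m, orderOf α = m + 1 := Nat.exists_eq_succ_of_ne_zero hne
  have hprim : IsPrimitiveRoot α (m + 1) := hm ▸ IsPrimitiveRoot.orderOf α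
  -- polynomial factorization
  have hpoly : (X : ℂ[X]) ^ (m + 1) - 1 = ∏ i ∈ range (m + 1), (X - C (α ^ i)) := by
    have := X_pow_sub_C_eq_prod hprim (Nat.succ_pos m) (one_pow (m + 1))
    simpa using this
  have hX1 : (X - 1 : ℂ[X]) ≠ 0 := by
    simpa using X_sub_C_ne_zero (1 : ℂ)
  have hcancel : (∑ i ∈ range (m + 1), (X : ℂ[X]) ^ i)
      = ∏ i ∈ range m, (X - C (α ^ (i + 1))) := by
    apply mul_right_cancel₀ hX1
    rw [geom_sum_mul, hpoly, Finset.prod_range_succ']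
    simp
  have hval : ((m + 1 : ℕ) : ℂ) = ∏ i ∈ range m, (1 - α ^ (i + 1)) := by
    have := congrArg (Polynomial.eval 1) hcancel
    simpa [eval_prod, eval_finset_sum] using this
  set U : ℂ := ∏ i ∈ range m, ∑ j ∈ range (i + 1), α ^ j with hU
  have hfac : ∀ i : ℕ, (1 : ℂ) - α ^ (i + 1) = (∑ j ∈ range (i + 1), α ^ j) * (1 - α) := by
    intro i
    have h := geom_sum_mul α (i + 1)
    linear_combination h
  have hprod : ((m + 1 : ℕ) : ℂ) = U * (1 - α) ^ m := by
    have hc : ∏ i ∈ range m, ((1 : ℂ) - α ^ (i + 1))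
        = ∏ i ∈ range m, ((∑ j ∈ range (i + 1), α ^ j) * (1 - α)) :=
      Finset.prod_congr rfl fun i _ => hfac i
    rw [hval, hc, Finset.prod_mul_distrib, Finset.prod_const, Finset.card_range]
  have h1 : ((1 : ℂ) - α) ^ 2 = 3 * β := by
    rw [← hβ]; ring
  have hsq : ((m + 1 : ℕ) : ℂ) ^ 2 = 3 ^ m * (β ^ m * U ^ 2) := by
    calc ((m + 1 : ℕ) : ℂ) ^ 2 = U ^ 2 * (((1 : ℂ) - α) ^ m) ^ 2 := by
          rw [hprod]; ring
      _ = U ^ 2 * (((1 : ℂ) - α) ^ 2) ^ m := by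
          rw [← pow_mul, ← pow_mul, mul_comm m 2]
      _ = U ^ 2 * (3 * β) ^ m := by rw [h1]
      _ = 3 ^ m * (β ^ m * U ^ 2) := by rw [mul_pow]; ring
  -- integrality
  have hαint : IsIntegral ℤ α := by
    refine ⟨X ^ k - C 1, ?_, ?_⟩
    · exact monic_X_pow_sub_C 1 (by omega)
    · simp [hk]
  have hγ : IsIntegral ℤ (β ^ m * U ^ 2) := by
    have hα' : α ∈ integralClosure ℤ ℂ := hαint
    have hβ' : β ∈ integralClosure ℤ ℂ := hβint
    have hU' : U ∈ integralClosure ℤ ℂ :=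
      Subalgebra.prod_mem _ fun i _ =>
        Subalgebra.sum_mem _ fun j _ => Subalgebra.pow_mem _ hα' j
    exact Subalgebra.mul_mem _ (Subalgebra.pow_mem _ hβ' m) (Subalgebra.pow_mem _ hU' 2)
  -- descend to ℤ
  have hdvd : (3 : ℤ) ^ m ∣ ((m + 1 : ℕ) : ℤ) ^ 2 := by
    have hceq : (algebraMap ℚ ℂ) (((m + 1 : ℕ) : ℚ) ^ 2 / 3 ^ m) = β ^ m * U ^ 2 := by
      have h3 : ((3 : ℂ) ^ m) ≠ 0 := pow_ne_zero m (by norm_num)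
      have hmap : (algebraMap ℚ ℂ) (((m + 1 : ℕ) : ℚ) ^ 2 / 3 ^ m)
          = ((m + 1 : ℕ) : ℂ) ^ 2 / 3 ^ m := by
        rw [map_div₀, map_pow, map_pow]
        push_cast
        norm_num
      rw [hmap, div_eq_iff h3, hsq]
      ring
    have hq : IsIntegral ℤ ((((m + 1 : ℕ) : ℚ) ^ 2 / 3 ^ m : ℚ)) := by
      rw [← isIntegral_algebraMap_iff (algebraMap ℚ ℂ).injective]
      rw [hceq]; exact hγ
    obtain ⟨y, hy⟩ := IsIntegrallyClosed.isIntegral_iff.mp hq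
    refine ⟨y, ?_⟩
    have h3 : ((3 : ℚ) ^ m) ≠ 0 := by positivity
    have : ((m + 1 : ℕ) : ℚ) ^ 2 = 3 ^ m * (y : ℚ) := by
      rw [show ((y : ℚ)) = algebraMap ℤ ℚ y from rfl, hy]
      field_simp
    exact_mod_cast this
  have hdvdn : 3 ^ m ∣ (m + 1) ^ 2 := by
    have : ((3 ^ m : ℕ) : ℤ) ∣ (((m + 1) ^ 2 : ℕ) : ℤ) := by push_cast; exact hdvd
    exact_mod_cast this
  -- bound m
  have hm3 : m < 3 := by
    by_contra hge
    push_neg at hge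
    have hle : 3 ^ m ≤ (m + 1) ^ 2 := Nat.le_of_dvd (by positivity) hdvdn
    exact absurd hle (not_le.mpr (aux_sq_lt_pow m hge))
  have hdvd3 : orderOf α ∣ 3 := by
    interval_cases m
    · rw [hm]; norm_num
    · norm_num at hdvdn
    · rw [hm]
  exact orderOf_dvd_iff_pow_eq_one.mp hdvd3
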